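/- arXiv:0709.3123 — 2 statements merged into one kernel-verified Lean document; each statement's English description precedes it below -/
import Mathlib

section
/- Let g, g̃ be two positive definite symmetric bilinear forms on ℝ^n with g(ξ,ξ) ≥ m|ξ|², g̃(ξ,ξ) ≥ m|ξ|² for some m > 0, and suppose |g(ξ,ξ) − g̃(ξ,ξ)| ≤ ε|ξ|² for all ξ. Let h be a symmetric bilinear form with |h(ξ,ξ)| ≤ K|ξ|² for all ξ. Then the i-th generalized eigenvalues κ_i of h with respect to g and κ̃_i of h with respect to g̃ (each listed in increasing order) satisfy |κ_i − κ̃_i| ≤ (K/m²)ε for all i. -/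
open Matrix

section Aux

variable {n : ℕ}

private lemma dp_self_nonneg (v : Fin n → ℝ) : 0 ≤ v ⬝ᵥ v :=
  Finset.sum_nonneg fun i _ => mul_self_nonneg (v i)

private lemma dp_self_pos {v : Fin n → ℝ} (hv : v ≠ 0) : 0 < v ⬝ᵥ v :=
  lt_of_le_of_ne (dp_self_nonneg v) fun h => hv (dotProduct_self_eq_zero.mp h.symm)

private lemma symm_dp (A : Matrix (Fin n) (Fin n) ℝ) (hA : A.IsSymm) (x y : Fin n → ℝ) :
    A *ᵥ x ⬝ᵥ y = A *ᵥ y ⬝ᵥ x := by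
  rw [dotProduct_comm, dotProduct_mulVec, ← mulVec_transpose, hA.eq, dotProduct_comm]

private lemma mulVec_finset_sum (M : Matrix (Fin n) (Fin n) ℝ) (S : Finset (Fin n))
    (f : Fin n → Fin n → ℝ) : M *ᵥ (∑ j ∈ S, f j) = ∑ j ∈ S, M *ᵥ f j := by
  ext x
  simp only [mulVec, dotProduct, Finset.sum_apply, Finset.mul_sum]
  exact Finset.sum_comm

private lemma sum_dp (S : Finset (Fin n)) (f : Fin n → Fin n → ℝ) (w : Fin n → ℝ) :
    (∑ j ∈ S, f j) ⬝ᵥ w = ∑ j ∈ S, f j ⬝ᵥ w := by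
  simp only [dotProduct, Finset.sum_apply, Finset.sum_mul]
  exact Finset.sum_comm

private lemma dp_sum (w : Fin n → ℝ) (S : Finset (Fin n)) (f : Fin n → Fin n → ℝ) :
    w ⬝ᵥ (∑ j ∈ S, f j) = ∑ j ∈ S, w ⬝ᵥ f j := by
  simp only [dotProduct, Finset.sum_apply, Finset.mul_sum]
  exact Finset.sum_comm

private lemma quad_expand (M : Matrix (Fin n) (Fin n) ℝ) (S : Finset (Fin n))
    (c : Fin n → ℝ) (b : Fin n → Fin n → ℝ) :
    M *ᵥ (∑ j ∈ S, c j • b j) ⬝ᵥ (∑ k ∈ S, c k • b k)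
      = ∑ j ∈ S, ∑ k ∈ S, c j * c k * (M *ᵥ b j ⬝ᵥ b k) := by
  rw [mulVec_finset_sum, sum_dp]
  refine Finset.sum_congr rfl fun j _ => ?_
  rw [dp_sum]
  refine Finset.sum_congr rfl fun k _ => ?_
  rw [mulVec_smul, smul_dotProduct, dotProduct_smul, smul_eq_mul, smul_eq_mul]
  ring

private lemma psd_quad (A : Matrix (Fin n) (Fin n) ℝ) (hA : A.PosSemidef) (x : Fin n → ℝ) :
    0 ≤ A *ᵥ x ⬝ᵥ x := by
  have := hA.dotProduct_mulVec_nonneg x; simpa [dotProduct_comm] using this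

/-- Key quadratic-form bound: on the span of eigenvectors with eigenvalues `≤ μ`,
we have `h(ξ,ξ) ≤ μ g(ξ,ξ)`. -/
private lemma key (h g : Matrix (Fin n) (Fin n) ℝ) (hh : h.IsSymm) (hg : g.IsSymm)
    (hgps : g.PosSemidef) (κ : Fin n → ℝ) (b : Fin n → Fin n → ℝ)
    (hb : ∀ j, h *ᵥ b j = κ j • g *ᵥ b j)
    (μ : ℝ) (S : Finset (Fin n)) (hS : ∀ j ∈ S, κ j ≤ μ) (c : Fin n → ℝ) :
    h *ᵥ (∑ j ∈ S, c j • b j) ⬝ᵥ (∑ j ∈ S, c j • b j)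
      ≤ μ * (g *ᵥ (∑ j ∈ S, c j • b j) ⬝ᵥ (∑ j ∈ S, c j • b j)) := by
  set ξ := ∑ j ∈ S, c j • b j with hξ
  have entry : ∀ j ∈ S, ∀ k ∈ S,
      μ * (g *ᵥ b j ⬝ᵥ b k) - (h *ᵥ b j ⬝ᵥ b k)
        = (Real.sqrt (μ - κ j) * Real.sqrt (μ - κ k)) * (g *ᵥ b j ⬝ᵥ b k) := by
    intro j hj k hk
    have hjk : h *ᵥ b j ⬝ᵥ b k = κ j * (g *ᵥ b j ⬝ᵥ b k) := by
      rw [hb j, smul_dotProduct, smul_eq_mul]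
    have hkj : h *ᵥ b k ⬝ᵥ b j = κ k * (g *ᵥ b k ⬝ᵥ b j) := by
      rw [hb k, smul_dotProduct, smul_eq_mul]
    have horth : κ j * (g *ᵥ b j ⬝ᵥ b k) = κ k * (g *ᵥ b j ⬝ᵥ b k) := by
      rw [← hjk, symm_dp h hh, hkj, symm_dp g hg]
    rcases eq_or_ne (g *ᵥ b j ⬝ᵥ b k) 0 with h0 | h0
    · simp [hjk, h0]
    · have hκeq : κ j = κ k := mul_right_cancel₀ h0 horth
      have hsq : Real.sqrt (μ - κ j) * Real.sqrt (μ - κ k) = μ - κ j := by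
        rw [hκeq]; exact Real.mul_self_sqrt (sub_nonneg.mpr (hS k hk))
      rw [hjk, hsq]; ring
  set c' : Fin n → ℝ := fun j => c j * Real.sqrt (μ - κ j) with hc'
  set η := ∑ j ∈ S, c' j • b j with hη
  have main : μ * (g *ᵥ ξ ⬝ᵥ ξ) - (h *ᵥ ξ ⬝ᵥ ξ) = g *ᵥ η ⬝ᵥ η := by
    rw [hξ, hη, quad_expand, quad_expand, quad_expand, Finset.mul_sum, ← Finset.sum_sub_distrib]
    refine Finset.sum_congr rfl fun j hj => ?_
    rw [Finset.mul_sum, ← Finset.sum_sub_distrib]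
    refine Finset.sum_congr rfl fun k hk => ?_
    simp only [hc']
    linear_combination (c j * c k) * entry j hj k hk
  have := psd_quad g hgps η
  linarith

/-- Nontrivial intersection of the span of the first `i+1` vectors of `b` with the
span of the last `n-i` vectors of `b'`. -/
private lemma exists_common (b b' : Module.Basis (Fin n) ℝ (Fin n → ℝ)) (i : Fin n) :
    ∃ ξ : Fin n → ℝ, ξ ≠ 0 ∧
      (∃ c : Fin n → ℝ, ξ = ∑ j ∈ Finset.Iic i, c j • b j) ∧
      (∃ c : Fin n → ℝ, ξ = ∑ j ∈ Finset.Ici i, c j • b' j) := by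
  classical
  set V : Submodule ℝ (Fin n → ℝ) :=
    Submodule.span ℝ (Set.range fun j : {j // j ∈ Finset.Iic i} => b ↑j) with hV
  set W : Submodule ℝ (Fin n → ℝ) :=
    Submodule.span ℝ (Set.range fun j : {j // j ∈ Finset.Ici i} => b' ↑j) with hW
  have hliV : LinearIndependent ℝ (fun j : {j // j ∈ Finset.Iic i} => b ↑j) :=
    b.linearIndependent.comp _ Subtype.val_injective
  have hliW : LinearIndependent ℝ (fun j : {j // j ∈ Finset.Ici i} => b' ↑j) :=
    b'.linearIndependent.comp _ Subtype.val_injective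
  have hVrank : Module.finrank ℝ V = (i : ℕ) + 1 := by
    rw [hV, finrank_span_eq_card hliV, Fintype.card_coe, Fin.card_Iic]
  have hWrank : Module.finrank ℝ W = n - (i : ℕ) := by
    rw [hW, finrank_span_eq_card hliW, Fintype.card_coe, Fin.card_Ici]
  have hne : V ⊓ W ≠ ⊥ := by
    intro hbot
    have hsum := Submodule.finrank_sup_add_finrank_inf_eq V W
    rw [hbot] at hsum
    simp only [finrank_bot, add_zero] at hsum
    have hle : Module.finrank ℝ ↥(V ⊔ W) ≤ Module.finrank ℝ (Fin n → ℝ) :=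
      Submodule.finrank_le _
    rw [Module.finrank_fin_fun] at hle
    have hi := i.isLt
    omega
  obtain ⟨ξ, hξmem, hξ0⟩ := (Submodule.ne_bot_iff _).mp hne
  refine ⟨ξ, hξ0, ?_, ?_⟩
  · obtain ⟨c, hc⟩ := (Submodule.mem_span_range_iff_exists_fun ℝ).mp hξmem.1
    refine ⟨fun j => if hj : j ∈ Finset.Iic i then c ⟨j, hj⟩ else 0, ?_⟩
    rw [← hc, ← Finset.sum_attach (Finset.Iic i) (fun j => _ • b j)]
    refine (Finset.sum_congr rfl fun j _ => ?_).symm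
    rw [dif_pos j.2]
  · obtain ⟨c, hc⟩ := (Submodule.mem_span_range_iff_exists_fun ℝ).mp hξmem.2
    refine ⟨fun j => if hj : j ∈ Finset.Ici i then c ⟨j, hj⟩ else 0, ?_⟩
    rw [← hc, ← Finset.sum_attach (Finset.Ici i) (fun j => _ • b' j)]
    refine (Finset.sum_congr rfl fun j _ => ?_).symm
    rw [dif_pos j.2]

/-- One-sided estimate. -/
private lemma one_dir (h g g' : Matrix (Fin n) (Fin n) ℝ)
    (hh : h.IsSymm) (hgpd : g.PosDef) (hg'pd : g'.PosDef)
    (K m ε : ℝ) (hm : 0 < m)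
    (hgm : ∀ ξ : Fin n → ℝ, m * (ξ ⬝ᵥ ξ) ≤ (g.mulVec ξ) ⬝ᵥ ξ)
    (hg'm : ∀ ξ : Fin n → ℝ, m * (ξ ⬝ᵥ ξ) ≤ (g'.mulVec ξ) ⬝ᵥ ξ)
    (hclose : ∀ ξ : Fin n → ℝ, |(g.mulVec ξ) ⬝ᵥ ξ - (g'.mulVec ξ) ⬝ᵥ ξ| ≤ ε * (ξ ⬝ᵥ ξ))
    (hK : ∀ ξ : Fin n → ℝ, |(h.mulVec ξ) ⬝ᵥ ξ| ≤ K * (ξ ⬝ᵥ ξ))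
    (κ κ' : Fin n → ℝ) (hκmono : Monotone κ) (hκ'mono : Monotone κ')
    (b : Module.Basis (Fin n) ℝ (Fin n → ℝ)) (hb : ∀ j, h.mulVec (b j) = κ j • g.mulVec (b j))
    (b' : Module.Basis (Fin n) ℝ (Fin n → ℝ)) (hb' : ∀ j, h.mulVec (b' j) = κ' j • g'.mulVec (b' j))
    (i : Fin n) : κ' i - κ i ≤ K / m ^ 2 * ε := by
  obtain ⟨ξ, hξ0, ⟨c, hc⟩, ⟨c', hc'⟩⟩ := exists_common b b' i
  have hξξ : 0 < ξ ⬝ᵥ ξ := dp_self_pos hξ0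
  have hε : 0 ≤ ε := by
    have h1 := hclose ξ
    nlinarith [abs_nonneg ((g.mulVec ξ) ⬝ᵥ ξ - (g'.mulVec ξ) ⬝ᵥ ξ)]
  have hKnn : 0 ≤ K := by
    have h1 := hK ξ
    nlinarith [abs_nonneg ((h.mulVec ξ) ⬝ᵥ ξ)]
  -- |κ i| ≤ K / m
  have hbi := b.ne_zero i
  have hbii : 0 < (b i) ⬝ᵥ (b i) := dp_self_pos hbi
  have hgbi : m * ((b i) ⬝ᵥ (b i)) ≤ g *ᵥ (b i) ⬝ᵥ (b i) := hgm (b i)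
  have hhbi : h *ᵥ (b i) ⬝ᵥ (b i) = κ i * (g *ᵥ (b i) ⬝ᵥ (b i)) := by
    rw [hb i, smul_dotProduct, smul_eq_mul]
  have hκabs : |κ i| ≤ K / m := by
    have h1 : |κ i| * (g *ᵥ (b i) ⬝ᵥ (b i)) ≤ K * ((b i) ⬝ᵥ (b i)) := by
      have := hK (b i)
      rw [hhbi, abs_mul] at this
      have hgpos : 0 < g *ᵥ (b i) ⬝ᵥ (b i) := lt_of_lt_of_le (by positivity) hgbi
      rwa [abs_of_pos hgpos] at this
    rw [le_div_iff₀ hm]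
    by_contra hcon
    push_neg at hcon
    have : K * ((b i) ⬝ᵥ (b i)) < |κ i| * (g *ᵥ (b i) ⬝ᵥ (b i)) := by
      calc K * ((b i) ⬝ᵥ (b i)) < |κ i| * m * ((b i) ⬝ᵥ (b i)) :=
            (mul_lt_mul_iff_of_pos_right hbii).mpr hcon
        _ = |κ i| * (m * ((b i) ⬝ᵥ (b i))) := by ring
        _ ≤ |κ i| * (g *ᵥ (b i) ⬝ᵥ (b i)) :=
            mul_le_mul_of_nonneg_left hgbi (abs_nonneg _)
    linarith
  -- upper bound on h(ξ,ξ)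
  have upper : h *ᵥ ξ ⬝ᵥ ξ ≤ κ i * (g *ᵥ ξ ⬝ᵥ ξ) := by
    rw [hc]
    exact key h g hh hgpd.isHermitian hgpd.posSemidef κ b hb (κ i) (Finset.Iic i)
      (fun j hj => hκmono (Finset.mem_Iic.mp hj)) c
  -- lower bound on h(ξ,ξ)
  have lower : κ' i * (g' *ᵥ ξ ⬝ᵥ ξ) ≤ h *ᵥ ξ ⬝ᵥ ξ := by
    have hb'neg : ∀ j, (-h) *ᵥ b' j = (-κ') j • g' *ᵥ b' j := by
      intro j
      rw [neg_mulVec, hb' j, Pi.neg_apply, neg_smul]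
    have := key (-h) g' hh.neg hg'pd.isHermitian hg'pd.posSemidef (-κ') b' hb'neg
      (-(κ' i)) (Finset.Ici i)
      (fun j hj => neg_le_neg (hκ'mono (Finset.mem_Ici.mp hj))) c'
    rw [← hc', neg_mulVec, neg_dotProduct] at this
    linarith
  -- combine
  have hclξ := hclose ξ
  have hdiff : κ i * ((g *ᵥ ξ ⬝ᵥ ξ) - (g' *ᵥ ξ ⬝ᵥ ξ)) ≤ K / m * (ε * (ξ ⬝ᵥ ξ)) := by
    calc κ i * ((g *ᵥ ξ ⬝ᵥ ξ) - (g' *ᵥ ξ ⬝ᵥ ξ))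
        ≤ |κ i * ((g *ᵥ ξ ⬝ᵥ ξ) - (g' *ᵥ ξ ⬝ᵥ ξ))| := le_abs_self _
      _ = |κ i| * |(g *ᵥ ξ ⬝ᵥ ξ) - (g' *ᵥ ξ ⬝ᵥ ξ)| := abs_mul _ _
      _ ≤ K / m * (ε * (ξ ⬝ᵥ ξ)) :=
          mul_le_mul hκabs (hclose ξ) (abs_nonneg _) (div_nonneg hKnn hm.le)
  have hkey : (κ' i - κ i) * (g' *ᵥ ξ ⬝ᵥ ξ) ≤ K / m * ε * (ξ ⬝ᵥ ξ) := by nlinarith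
  rcases le_or_gt (κ' i) (κ i) with hle | hlt
  · have : 0 ≤ K / m ^ 2 * ε := by positivity
    linarith
  · have hg'ξ := hg'm ξ
    have hd : 0 < κ' i - κ i := by linarith
    have h2 : (κ' i - κ i) * (m * (ξ ⬝ᵥ ξ)) ≤ K / m * ε * (ξ ⬝ᵥ ξ) :=
      le_trans (mul_le_mul_of_nonneg_left hg'ξ hd.le) hkey
    have h3 : (κ' i - κ i) * m ≤ K / m * ε := by
      have := (mul_le_mul_iff_of_pos_right hξξ).mp (by linarith [h2] : (κ' i - κ i) * m * (ξ ⬝ᵥ ξ) ≤ K / m * ε * (ξ ⬝ᵥ ξ))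
      exact this
    rw [show K / m ^ 2 * ε = (K / m * ε) / m by rw [pow_two, ← div_div]; ring, le_div_iff₀ hm]
    exact h3

end Aux

/-- Stability of generalized eigenvalues under perturbation of the metric: if the
positive definite forms `g`, `g̃` are uniformly bounded below by `m > 0`, their
quadratic forms differ by at most `ε|ξ|²`, and `|h(ξ,ξ)| ≤ K|ξ|²`, then the
increasingly ordered generalized eigenvalues of `h` with respect to `g` and to `g̃`
differ by at most `(K/m²)ε`. -/
theorem generalized_eigenvalues_metric_stability {n : ℕ}
    (h g g' : Matrix (Fin n) (Fin n) ℝ)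
    (hh : h.IsSymm) (hgpd : g.PosDef) (hg'pd : g'.PosDef)
    (K m ε : ℝ) (hm : 0 < m)
    (hgm : ∀ ξ : Fin n → ℝ, m * (ξ ⬝ᵥ ξ) ≤ (g.mulVec ξ) ⬝ᵥ ξ)
    (hg'm : ∀ ξ : Fin n → ℝ, m * (ξ ⬝ᵥ ξ) ≤ (g'.mulVec ξ) ⬝ᵥ ξ)
    (hclose : ∀ ξ : Fin n → ℝ, |(g.mulVec ξ) ⬝ᵥ ξ - (g'.mulVec ξ) ⬝ᵥ ξ| ≤ ε * (ξ ⬝ᵥ ξ))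
    (hK : ∀ ξ : Fin n → ℝ, |(h.mulVec ξ) ⬝ᵥ ξ| ≤ K * (ξ ⬝ᵥ ξ))
    (κ κ' : Fin n → ℝ) (hκmono : Monotone κ) (hκ'mono : Monotone κ')
    (hκ : ∃ b : Module.Basis (Fin n) ℝ (Fin n → ℝ),
      ∀ i, h.mulVec (b i) = κ i • g.mulVec (b i))
    (hκ' : ∃ b : Module.Basis (Fin n) ℝ (Fin n → ℝ),
      ∀ i, h.mulVec (b i) = κ' i • g'.mulVec (b i)) :
    ∀ i, |κ i - κ' i| ≤ K / m ^ 2 * ε := by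
  intro i
  obtain ⟨b, hb⟩ := hκ
  obtain ⟨b', hb'⟩ := hκ'
  have hclose' : ∀ ξ : Fin n → ℝ, |(g'.mulVec ξ) ⬝ᵥ ξ - (g.mulVec ξ) ⬝ᵥ ξ| ≤ ε * (ξ ⬝ᵥ ξ) := by
    intro ξ; rw [abs_sub_comm]; exact hclose ξ
  rw [abs_sub_le_iff]
  constructor
  · exact one_dir h g' g hh hg'pd hgpd K m ε hm hg'm hgm hclose' hK κ' κ hκ'mono hκmono
      b' hb' b hb i
  · exact one_dir h g g' hh hgpd hg'pd K m ε hm hgm hg'm hclose hK κ κ' hκmono hκ'mono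
      b hb b' hb' i
end

section
/- Let F : Γ → ℝ be monotone (strictly increasing in each variable) on an open convex cone Γ ⊆ ℝ^n, and suppose symmetric matrices h, h̄ (with common positive definite metric g) satisfy h ≥ h̄ in the Loewner order, with both pairs admissible (eigenvalues in Γ). Then F(eigenvalues of h w.r.t. g) ≥ F(eigenvalues of h̄ w.r.t. g). -/
open Matrix Finset

private lemma symm_dot {n : ℕ} {A : Matrix (Fin n) (Fin n) ℝ} (hA : A.IsSymm)
    (x y : Fin n → ℝ) : x ⬝ᵥ (A *ᵥ y) = y ⬝ᵥ (A *ᵥ x) := by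
  rw [Matrix.dotProduct_mulVec, ← Matrix.mulVec_transpose, hA.eq, dotProduct_comm]

private lemma gram_zero {n : ℕ} {h g : Matrix (Fin n) (Fin n) ℝ}
    (hh : h.IsSymm) (hgs : g.IsSymm) {b : Fin n → (Fin n → ℝ)} {κ : Fin n → ℝ}
    (heig : ∀ j, h *ᵥ (b j) = κ j • (g *ᵥ (b j))) {j k : Fin n} (hjk : κ j ≠ κ k) :
    b j ⬝ᵥ (g *ᵥ b k) = 0 := by
  have e1 : b j ⬝ᵥ (h *ᵥ b k) = κ k * (b j ⬝ᵥ (g *ᵥ b k)) := by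
    rw [heig k, dotProduct_smul, smul_eq_mul]
  have e2 : b j ⬝ᵥ (h *ᵥ b k) = κ j * (b j ⬝ᵥ (g *ᵥ b k)) := by
    rw [symm_dot hh, heig j, dotProduct_smul, smul_eq_mul, symm_dot hgs]
  have := e1.symm.trans e2
  rcases mul_eq_mul_right_iff.mp this with h1 | h1
  · exact absurd h1.symm hjk
  · exact h1

private lemma sum_dot {m ι : Type*} [Fintype m] [Fintype ι] (f : ι → m → ℝ) (w : m → ℝ) :
    (∑ j, f j) ⬝ᵥ w = ∑ j, f j ⬝ᵥ w := by
  simp only [dotProduct, Finset.sum_apply, Finset.sum_mul]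
  exact Finset.sum_comm

private lemma dot_sum {m ι : Type*} [Fintype m] [Fintype ι] (w : m → ℝ) (f : ι → m → ℝ) :
    w ⬝ᵥ (∑ j, f j) = ∑ j, w ⬝ᵥ f j := by
  simp only [dotProduct, Finset.sum_apply, Finset.mul_sum]
  exact Finset.sum_comm

private lemma expand_dot {n : ℕ} {ι : Type*} [Fintype ι]
    (A : Matrix (Fin n) (Fin n) ℝ) (b : Fin n → (Fin n → ℝ)) (e : ι → Fin n)
    (d d' : ι → ℝ) :
    (∑ j, d j • b (e j)) ⬝ᵥ (A *ᵥ (∑ k, d' k • b (e k)))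
      = ∑ j, ∑ k, d j * d' k * (b (e j) ⬝ᵥ (A *ᵥ b (e k))) := by
  rw [← Matrix.mulVecLin_apply, map_sum, sum_dot]
  refine Finset.sum_congr rfl fun j _ => ?_
  rw [dot_sum]
  refine Finset.sum_congr rfl fun k _ => ?_
  rw [LinearMap.map_smul, smul_dotProduct, dotProduct_smul, Matrix.mulVecLin_apply]
  simp [mul_assoc, mul_comm, mul_left_comm]

private lemma rayleigh_le {n : ℕ} {ι : Type*} [Fintype ι]
    {h g : Matrix (Fin n) (Fin n) ℝ} (hh : h.IsSymm) (hgs : g.IsSymm)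
    (hgps : g.PosSemidef)
    {b : Fin n → (Fin n → ℝ)} {κ : Fin n → ℝ}
    (heig : ∀ j, h *ᵥ (b j) = κ j • (g *ᵥ (b j)))
    (e : ι → Fin n) (μ : ℝ) (hμ : ∀ j : ι, κ (e j) ≤ μ) (c : ι → ℝ) :
    (∑ j, c j • b (e j)) ⬝ᵥ (h *ᵥ (∑ j, c j • b (e j)))
      ≤ μ * ((∑ j, c j • b (e j)) ⬝ᵥ (g *ᵥ (∑ j, c j • b (e j)))) := by
  set G : ι → ι → ℝ := fun j k => b (e j) ⬝ᵥ (g *ᵥ b (e k)) with hG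
  set t : ι → ℝ := fun j => Real.sqrt (μ - κ (e j)) with ht
  set w : Fin n → ℝ := ∑ j, (c j * t j) • b (e j) with hw
  -- expansion of the h-quadratic form
  have hQh : (∑ j, c j • b (e j)) ⬝ᵥ (h *ᵥ (∑ j, c j • b (e j)))
      = ∑ j, ∑ k, c j * c k * (κ (e k) * G j k) := by
    rw [expand_dot h b e c c]
    refine Finset.sum_congr rfl fun j _ => Finset.sum_congr rfl fun k _ => ?_
    rw [heig (e k), dotProduct_smul, smul_eq_mul]
  have hQg : (∑ j, c j • b (e j)) ⬝ᵥ (g *ᵥ (∑ j, c j • b (e j)))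
      = ∑ j, ∑ k, c j * c k * G j k := expand_dot g b e c c
  have hQw : w ⬝ᵥ (g *ᵥ w) = ∑ j, ∑ k, (c j * t j) * (c k * t k) * G j k :=
    expand_dot g b e _ _
  have hwnn : 0 ≤ w ⬝ᵥ (g *ᵥ w) := by
    have := hgps.dotProduct_mulVec_nonneg w
    simpa using this
  -- key termwise identity
  have hkey : ∑ j, ∑ k, c j * c k * ((μ - κ (e k)) * G j k)
      = ∑ j, ∑ k, (c j * t j) * (c k * t k) * G j k := by
    refine Finset.sum_congr rfl fun j _ => Finset.sum_congr rfl fun k _ => ?_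
    by_cases hjk : κ (e j) = κ (e k)
    · have ht2 : t j * t k = μ - κ (e k) := by
        rw [ht]; simp only [hjk]
        exact Real.mul_self_sqrt (by linarith [hμ k])
      calc c j * c k * ((μ - κ (e k)) * G j k)
          = (t j * t k) * (c j * c k * G j k) := by rw [ht2]; ring
        _ = (c j * t j) * (c k * t k) * G j k := by ring
    · have : G j k = 0 := gram_zero hh hgs heig hjk
      simp [this]
  have hdiff : μ * (∑ j, ∑ k, c j * c k * G j k) - ∑ j, ∑ k, c j * c k * (κ (e k) * G j k)
      = ∑ j, ∑ k, c j * c k * ((μ - κ (e k)) * G j k) := by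
    rw [Finset.mul_sum, ← Finset.sum_sub_distrib]
    refine Finset.sum_congr rfl fun j _ => ?_
    rw [Finset.mul_sum, ← Finset.sum_sub_distrib]
    exact Finset.sum_congr rfl fun k _ => by ring
  rw [hQh, hQg]
  rw [hQw] at hwnn
  rw [← hkey] at hwnn
  linarith [hdiff ▸ hwnn]

/-- Monotonicity of a curvature function under the Loewner order on second
fundamental forms: if `h ≥ h̄` with respect to the common positive definite metric
`g`, and both vectors of (increasingly ordered) generalized eigenvalues lie in the
defining cone `Γ`, then `F(κ(h,g)) ≥ F(κ(h̄,g))`. -/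
theorem curvature_function_monotone_loewner {n : ℕ}
    (Γ : Set (Fin n → ℝ)) (hΓopen : IsOpen Γ) (hΓconv : Convex ℝ Γ)
    (hΓcone : ∀ x ∈ Γ, ∀ t : ℝ, 0 < t → t • x ∈ Γ)
    (F : (Fin n → ℝ) → ℝ)
    (hmono : ∀ x ∈ Γ, ∀ y ∈ Γ, (∀ i, x i ≤ y i) → x ≠ y → F x < F y)
    (h h' g : Matrix (Fin n) (Fin n) ℝ)
    (hh : h.IsSymm) (hh' : h'.IsSymm) (hg : g.PosDef)
    (hle : (h - h').PosSemidef)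
    (κ κ' : Fin n → ℝ) (hκmono : Monotone κ) (hκ'mono : Monotone κ')
    (hκ : ∃ b : Module.Basis (Fin n) ℝ (Fin n → ℝ),
      ∀ i, h.mulVec (b i) = κ i • g.mulVec (b i))
    (hκ' : ∃ b : Module.Basis (Fin n) ℝ (Fin n → ℝ),
      ∀ i, h'.mulVec (b i) = κ' i • g.mulVec (b i))
    (hadm : κ ∈ Γ) (hadm' : κ' ∈ Γ) :
    F κ' ≤ F κ := by
  obtain ⟨b, hb⟩ := hκ
  obtain ⟨b', hb'⟩ := hκ'
  have hgs : g.IsSymm := by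
    have := hg.1
    rwa [Matrix.IsHermitian, Matrix.conjTranspose_eq_transpose_of_trivial] at this
  -- eigenvalue monotonicity under the Loewner order
  have hev : ∀ i, κ' i ≤ κ i := by
    intro i
    set V : Submodule ℝ (Fin n → ℝ) :=
      Submodule.span ℝ (Set.range (fun j : Set.Iic i => b j.1)) with hV
    set W : Submodule ℝ (Fin n → ℝ) :=
      Submodule.span ℝ (Set.range (fun j : Set.Ici i => b' j.1)) with hW
    have hVrank : Module.finrank ℝ V = (i : ℕ) + 1 := by
      rw [hV, show (fun j : Set.Iic i => b j.1) = ⇑b ∘ Subtype.val from rfl,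
        finrank_span_eq_card
          (b.linearIndependent.comp Subtype.val Subtype.val_injective)]
      rw [Fintype.card_Iic, Fin.card_Iic]
    have hWrank : Module.finrank ℝ W = n - (i : ℕ) := by
      rw [hW, show (fun j : Set.Ici i => b' j.1) = ⇑b' ∘ Subtype.val from rfl,
        finrank_span_eq_card
          (b'.linearIndependent.comp Subtype.val Subtype.val_injective)]
      rw [Fintype.card_Ici, Fin.card_Ici]
    have hinf : 0 < Module.finrank ℝ ↥(V ⊓ W) := by
      have hsum := Submodule.finrank_sup_add_finrank_inf_eq V W
      have hsup : Module.finrank ℝ ↥(V ⊔ W) ≤ n := by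
        have := Submodule.finrank_le (V ⊔ W)
        simpa using this
      have hi : (i : ℕ) < n := i.2
      omega
    obtain ⟨v, hvVW, hv0⟩ := exists_mem_ne_zero_of_rank_pos
      (s := V ⊓ W)
      (by rw [← Module.finrank_eq_rank ℝ ↥(V ⊓ W)]; exact_mod_cast hinf)
    obtain ⟨c, hc⟩ := (Submodule.mem_span_range_iff_exists_fun ℝ).mp
      (hvVW.1 : v ∈ V)
    obtain ⟨c', hc'⟩ := (Submodule.mem_span_range_iff_exists_fun ℝ).mp
      (hvVW.2 : v ∈ W)
    have hQpos : 0 < v ⬝ᵥ (g *ᵥ v) := by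
      have := hg.dotProduct_mulVec_pos hv0
      simpa using this
    -- upper bound via h, V
    have hup : v ⬝ᵥ (h *ᵥ v) ≤ κ i * (v ⬝ᵥ (g *ᵥ v)) := by
      rw [← hc]
      exact rayleigh_le hh hgs hg.posSemidef hb (fun j : Set.Iic i => j.1) (κ i)
        (fun j => hκmono j.2) c
    -- lower bound via h', W
    have hlow : κ' i * (v ⬝ᵥ (g *ᵥ v)) ≤ v ⬝ᵥ (h' *ᵥ v) := by
      have hnegsymm : (-h').IsSymm := by
        rw [Matrix.IsSymm, Matrix.transpose_neg, hh'.eq]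
      have hnegeig : ∀ j, (-h') *ᵥ (b' j) = (-κ' j) • (g *ᵥ (b' j)) := by
        intro j
        rw [Matrix.neg_mulVec, hb' j, neg_smul]
      have := rayleigh_le hnegsymm hgs hg.posSemidef hnegeig
        (fun j : Set.Ici i => j.1) (-κ' i)
        (fun j => neg_le_neg (hκ'mono j.2)) c'
      rw [hc'] at this
      rw [Matrix.neg_mulVec, dotProduct_neg] at this
      linarith
    -- Loewner order
    have hmid : v ⬝ᵥ (h' *ᵥ v) ≤ v ⬝ᵥ (h *ᵥ v) := by
      have := hle.dotProduct_mulVec_nonneg v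
      simp only [star_trivial] at this
      rw [Matrix.sub_mulVec, dotProduct_sub] at this
      linarith
    have : κ' i * (v ⬝ᵥ (g *ᵥ v)) ≤ κ i * (v ⬝ᵥ (g *ᵥ v)) := by linarith
    exact le_of_mul_le_mul_right (by linarith) hQpos
  by_cases heq : κ' = κ
  · rw [heq]
  · exact (hmono κ' hadm' κ hadm hev heq).le
end
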